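/- arXiv:2405.04952 — 2 statements merged into one kernel-verified Lean document; each statement's English description precedes it below -/
import Mathlib

section
/- (Cost transfer after pruning a collinear vertex, Case 2.1.) Let x_c, x_a, x_d, x_e, x_j ∈ ℝ² and costs g_c, g_d ≥ 0. Suppose x_j lies on the segment from x_c to x_a, x_e lies on the segment from x_d to x_j, and g_c + dist(x_c, x_a) < (g_d + dist(x_d, x_e)) + dist(x_e, x_a). Then g_c + dist(x_c, x_j) < g_d + dist(x_d, x_j). -/
theorem cost_transfer_pruned_collinear
    (xc xa xd xe xj : EuclideanSpace ℝ (Fin 2)) (gc gd : ℝ)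
    (hgc : 0 ≤ gc) (hgd : 0 ≤ gd)
    (t : ℝ) (ht0 : 0 ≤ t) (ht1 : t ≤ 1)
    (hxj : xj = xc + t • (xa - xc))
    (s : ℝ) (hs0 : 0 ≤ s) (hs1 : s ≤ 1)
    (hxe : xe = xd + s • (xj - xd))
    (h : gc + dist xc xa < (gd + dist xd xe) + dist xe xa) :
    gc + dist xc xj < gd + dist xd xj := by
  have hw1 : Wbtw ℝ xc xj xa := by
    refine ⟨t, ⟨ht0, ht1⟩, ?_⟩
    simp [AffineMap.lineMap_apply, hxj]
    abel
  have hw2 : Wbtw ℝ xd xe xj := by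
    refine ⟨s, ⟨hs0, hs1⟩, ?_⟩
    simp [AffineMap.lineMap_apply, hxe]
    abel
  have h1 : dist xc xj + dist xj xa = dist xc xa := dist_add_dist_eq_iff.mpr hw1
  have h2 : dist xd xe + dist xe xj = dist xd xj := dist_add_dist_eq_iff.mpr hw2
  have h3 : dist xe xa ≤ dist xe xj + dist xj xa := dist_triangle _ _ _
  linarith
end

section
/- (Cost transfer through an intersecting detour.) Let x_c, x_e, x_a, y ∈ ℝ², g_c, g_e ≥ 0 with g_c + dist(x_c, x_a) < g_e + dist(x_e, x_a). If x_i lies on the segment from x_c to x_a and also on the segment from x_e to y, then the path cost g_e + dist(x_e, y) satisfies g_e + dist(x_e, y) > g_c + dist(x_c, x_i) + dist(x_i, y). -/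
theorem cost_transfer_intersecting_detour
    (xc xe xa y xi : EuclideanSpace ℝ (Fin 2)) (gc ge : ℝ)
    (hgc : 0 ≤ gc) (hge : 0 ≤ ge)
    (h : gc + dist xc xa < ge + dist xe xa)
    (t : ℝ) (ht0 : 0 ≤ t) (ht1 : t ≤ 1)
    (hxi : xi = xc + t • (xa - xc))
    (s : ℝ) (hs0 : 0 ≤ s) (hs1 : s ≤ 1)
    (hxi' : xi = xe + s • (y - xe)) :
    ge + dist xe y > gc + dist xc xi + dist xi y := by
  have h1 : xi ∈ segment ℝ xc xa := by
    rw [segment_eq_image']; exact ⟨t, ⟨ht0, ht1⟩, hxi.symm⟩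
  have h2 : xi ∈ segment ℝ xe y := by
    rw [segment_eq_image']; exact ⟨s, ⟨hs0, hs1⟩, hxi'.symm⟩
  have e1 : dist xc xi + dist xi xa = dist xc xa :=
    (mem_segment_iff_wbtw.1 h1).dist_add_dist
  have e2 : dist xe xi + dist xi y = dist xe y :=
    (mem_segment_iff_wbtw.1 h2).dist_add_dist
  have tri : dist xe xa ≤ dist xe xi + dist xi xa := dist_triangle _ _ _
  linarith
end
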